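/- arXiv:1603.01296 — 3 statements merged into one kernel-verified Lean document; each statement's English description precedes it below -/
import Mathlib

section
/- Let H₁ = 1 + 2·M₂(ℤ₂), H₂ = 1 + 4·M₂(ℤ₂), H₃ = 1 + 8·M₂(ℤ₂) be congruence subgroups of GL₂(ℤ₂), and let 𝓗 be the subgroup of H₁ generated by the squares {h² : h ∈ H₁}. Then 𝓗 = {g ∈ H₂ : det g ≡ 1 mod 8}, and moreover [H₂ : 𝓗] = 2 and [H₁ : 𝓗] = 2⁵. -/
open Matrix

abbrev M2 : Type := Matrix (Fin 2) (Fin 2) ℤ_[2]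

lemma two_cast : ((2:ℕ):ℤ_[2]) = (2:ℤ_[2]) := by norm_num

lemma pow_dvd_iff (k : ℕ) (x : ℤ_[2]) : (2:ℤ_[2])^k ∣ x ↔ PadicInt.toZModPow k x = 0 := by
  rw [show (2:ℤ_[2]) = ((2:ℕ):ℤ_[2]) by norm_num, ← Ideal.mem_span_singleton,
    ← PadicInt.ker_toZModPow, RingHom.mem_ker]

lemma two_dvd_iff (x : ℤ_[2]) : (2:ℤ_[2]) ∣ x ↔ PadicInt.toZModPow 1 x = 0 := by
  rw [← pow_dvd_iff, pow_one]

lemma even_sq_add (w : ℤ_[2]) : (2:ℤ_[2]) ∣ w^2 + w := by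
  rw [two_dvd_iff, map_add, map_pow]
  have : ∀ y : ZMod (2^1), y^2 + y = 0 := by decide
  exact this _

lemma even_sq_sub (w : ℤ_[2]) : (2:ℤ_[2]) ∣ w^2 - w := by
  rw [two_dvd_iff, map_sub, map_pow]
  have : ∀ y : ZMod (2^1), y^2 - y = 0 := by decide
  exact this _

lemma norm_one_of_odd {x : ℤ_[2]} (h : ¬ (2:ℤ_[2]) ∣ x) : ‖x‖ = 1 := by
  refine le_antisymm (PadicInt.norm_le_one x) ?_
  by_contra hlt
  push_neg at hlt
  have := (PadicInt.norm_lt_one_iff_dvd x).1 hlt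
  rw [two_cast] at this
  exact h this

lemma not_two_dvd_one_add_two_mul (y : ℤ_[2]) : ¬ (2:ℤ_[2]) ∣ (1 + 2*y) := by
  intro h
  have h1 : (2:ℤ_[2]) ∣ 1 := (dvd_add_right ⟨y, rfl⟩).mp (by rwa [add_comm] at h)
  have h2 : ‖(2:ℤ_[2])‖ < 1 := by
    have := PadicInt.norm_p (p := 2)
    rw [two_cast] at this
    rw [this]; norm_num
  have h3 := isUnit_of_dvd_one h1
  rw [PadicInt.isUnit_iff] at h3
  rw [h3] at h2; exact lt_irrefl _ h2

noncomputable def congSubgroup (k : ℕ) : Subgroup (GL (Fin 2) ℤ_[2]) :=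
  MonoidHom.ker (Matrix.GeneralLinearGroup.map
    (Ideal.Quotient.mk (Ideal.span {(2 : ℤ_[2]) ^ k})))

lemma mem_cong {k : ℕ} {g : GL (Fin 2) ℤ_[2]} :
    g ∈ congSubgroup k ↔ ∀ i j, (2:ℤ_[2])^k ∣ ((g : Matrix (Fin 2) (Fin 2) ℤ_[2]) i j - (1 : Matrix (Fin 2) (Fin 2) ℤ_[2]) i j) := by
  rw [congSubgroup, MonoidHom.mem_ker, Matrix.GeneralLinearGroup.map, Units.ext_iff]
  simp only [Units.coe_map, MonoidHom.coe_coe, Units.val_one]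
  rw [show (1 : Matrix (Fin 2) (Fin 2) (ℤ_[2] ⧸ Ideal.span {(2:ℤ_[2])^k})) =
      (1 : Matrix (Fin 2) (Fin 2) ℤ_[2]).map (Ideal.Quotient.mk _) by
    rw [Matrix.map_one _ (map_zero _) (map_one _)]]
  rw [← Matrix.ext_iff]
  constructor <;> intro h i j <;> have := h i j <;>
    simp only [Units.coe_map, MonoidHom.coe_coe, RingHom.mapMatrix_apply, Matrix.map_apply] at this ⊢
  · rw [← Ideal.mem_span_singleton, ← Ideal.Quotient.eq]
    exact this
  · show (Ideal.Quotient.mk _) ((g : Matrix (Fin 2) (Fin 2) ℤ_[2]) i j) =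
      (Ideal.Quotient.mk _) ((1 : Matrix (Fin 2) (Fin 2) ℤ_[2]) i j)
    rw [Ideal.Quotient.eq, Ideal.mem_span_singleton]
    exact this

lemma mem_cong' {k : ℕ} {g : GL (Fin 2) ℤ_[2]} :
    g ∈ congSubgroup k ↔ ∃ A : M2, (g : M2) = 1 + (2:ℤ_[2])^k • A := by
  rw [mem_cong]
  constructor
  · intro h
    refine ⟨Matrix.of fun i j => (h i j).choose, ?_⟩
    ext i j
    have := (h i j).choose_spec
    simp only [Matrix.add_apply, Matrix.smul_apply, smul_eq_mul, Matrix.of_apply]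
    linear_combination this
  · rintro ⟨A, hA⟩ i j
    rw [hA]
    simp only [Matrix.add_apply, Matrix.smul_apply, smul_eq_mul]
    exact ⟨A i j, by ring⟩

lemma cong_le {j k : ℕ} (h : j ≤ k) : congSubgroup k ≤ congSubgroup j := by
  intro g hg
  rw [mem_cong] at hg ⊢
  intro i i'
  exact dvd_trans (pow_dvd_pow (2:ℤ_[2]) h) (hg i i')

/-- The subgroup `{g ∈ H₂ : det g ≡ 1 mod 8}`. -/
noncomputable def Ssub : Subgroup (GL (Fin 2) ℤ_[2]) where
  carrier := {g : GL (Fin 2) ℤ_[2] | g ∈ congSubgroup 2 ∧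
        ∃ u : ℤ_[2], Matrix.det (g : Matrix (Fin 2) (Fin 2) ℤ_[2]) = 1 + 8 * u}
  one_mem' := ⟨one_mem _, 0, by simp⟩
  mul_mem' := by
    rintro a b ⟨ha, u, hu⟩ ⟨hb, v, hv⟩
    refine ⟨mul_mem ha hb, u + v + 8*u*v, ?_⟩
    have : ((a*b : GL (Fin 2) ℤ_[2]) : M2) = (a : M2) * (b : M2) := rfl
    rw [this, Matrix.det_mul, hu, hv]; ring
  inv_mem' := by
    rintro a ⟨ha, u, hu⟩
    refine ⟨inv_mem ha, ?_⟩
    have h1 : (a : M2) * ((a⁻¹ : GL (Fin 2) ℤ_[2]) : M2) = 1 := by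
      rw [show ((a⁻¹ : GL (Fin 2) ℤ_[2]) : M2) = ↑(a⁻¹) from rfl, ← Units.val_mul, mul_inv_cancel,
        Units.val_one]
    have h2 : Matrix.det (a : M2) * Matrix.det ((a⁻¹ : GL (Fin 2) ℤ_[2]) : M2) = 1 := by
      rw [← Matrix.det_mul, h1, Matrix.det_one]
    set x := Matrix.det ((a⁻¹ : GL (Fin 2) ℤ_[2]) : M2)
    refine ⟨-(u*x), ?_⟩
    rw [hu] at h2
    linear_combination h2

lemma sq_mem_Ssub {h : GL (Fin 2) ℤ_[2]} (hh : h ∈ congSubgroup 1) : h^2 ∈ Ssub := by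
  obtain ⟨A, hA⟩ := mem_cong'.1 hh
  have hval : ((h^2 : GL (Fin 2) ℤ_[2]) : M2) = (h : M2) * (h : M2) := by
    rw [show ((h^2 : GL (Fin 2) ℤ_[2]) : M2) = ((h:GL (Fin 2) ℤ_[2]) : M2)^2 from by
      rw [← Units.val_pow_eq_pow_val], pow_two]
  constructor
  · rw [mem_cong']
    refine ⟨A + A*A, ?_⟩
    rw [hval, hA]
    ext i j
    simp only [Matrix.mul_apply, Matrix.add_apply, Matrix.smul_apply, smul_eq_mul,
      Fin.sum_univ_two, Matrix.one_apply]
    fin_cases i <;> fin_cases j <;> simp <;> ring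
  · have hdet : Matrix.det ((h:GL (Fin 2) ℤ_[2]) : M2) = 1 + 2*(A 0 0 + A 1 1)
        + 4*(A 0 0 * A 1 1 - A 0 1 * A 1 0) := by
      rw [hA, Matrix.det_fin_two]
      simp only [Matrix.add_apply, Matrix.smul_apply, smul_eq_mul, Matrix.one_apply_eq,
        Matrix.one_apply_ne (show (0:Fin 2) ≠ 1 by decide),
        Matrix.one_apply_ne (show (1:Fin 2) ≠ 0 by decide)]
      ring
    set w := (A 0 0 + A 1 1) + 2*(A 0 0 * A 1 1 - A 0 1 * A 1 0) with hw
    obtain ⟨v, hv⟩ := even_sq_add w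
    refine ⟨v, ?_⟩
    rw [hval, Matrix.det_mul, hdet]
    have : (1 + 2*(A 0 0 + A 1 1) + 4*(A 0 0 * A 1 1 - A 0 1 * A 1 0)) = 1 + 2*w := by
      rw [hw]; ring
    rw [this]
    linear_combination 4 * hv

lemma sqrt_exists {g : GL (Fin 2) ℤ_[2]} {B : M2} (hg : (g : M2) = 1 + (4:ℤ_[2]) • B)
    (hτ : (2:ℤ_[2]) ∣ (B 0 0 + B 1 1)) (hδ : (2:ℤ_[2]) ∣ (B 0 0 * B 1 1 - B 0 1 * B 1 0)) :
    ∃ h ∈ congSubgroup 1, g = h^2 := by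
  obtain ⟨τ', hτ'⟩ := hτ
  obtain ⟨δ', hδ'⟩ := hδ
  set D : Polynomial ℤ_[2] := 2*Polynomial.X^2 + Polynomial.X - Polynomial.C τ' with hD
  set F : Polynomial ℤ_[2] := D^2 + D*(1 + 2*Polynomial.X) - Polynomial.C (2*δ') with hF
  have heval0 : F.eval 0 = (τ'^2 - τ') - 2*δ' := by
    simp [hF, hD]; ring
  have hderiv0 : F.derivative.eval 0 = 1 + 2*(-(2*τ')) := by
    simp [hF, hD, Polynomial.derivative_pow, Polynomial.derivative_mul]; ring
  have hnorm : ‖F.eval 0‖ < ‖F.derivative.eval 0‖^2 := by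
    rw [heval0, hderiv0, norm_one_of_odd (not_two_dvd_one_add_two_mul _), one_pow]
    rw [show ((1:ℝ)) = 1 from rfl]
    refine (PadicInt.norm_lt_one_iff_dvd _).2 ?_
    rw [two_cast]
    exact dvd_sub (even_sq_sub τ') ⟨δ', rfl⟩
  obtain ⟨z, hz, -, -, -⟩ := hensels_lemma hnorm
  set d : ℤ_[2] := 2*z^2 + z - τ' with hd
  have hFz : d^2 + d*(1+2*z) - 2*δ' = 0 := by
    have : F.eval z = d^2 + d*(1+2*z) - 2*δ' := by simp [hF, hD, hd]; try ring
    rw [← this]; exact hz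
  have e1 : (2*z)^2 + 2*z = (B 0 0 + B 1 1) + 2*d := by rw [hτ', hd]; ring
  have e2 : d^2 + d*(1+2*z) = B 0 0 * B 1 1 - B 0 1 * B 1 0 := by
    rw [hδ']; linear_combination hFz
  have hcunit : IsUnit ((1:ℤ_[2])+2*z) :=
    PadicInt.isUnit_iff.2 (norm_one_of_odd (not_two_dvd_one_add_two_mul z))
  set c : ℤ_[2] := ↑(hcunit.unit⁻¹) with hcdef
  have hc : c * (1+2*z) = 1 := by
    rw [hcdef]
    nth_rewrite 2 [← IsUnit.unit_spec hcunit]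
    exact Units.inv_mul _
  set A : M2 := c • B + (c*d) • (1:M2) with hA
  set X : M2 := 1 + (2:ℤ_[2]) • A with hX
  have hXX : X * X = (g : M2) := by
    rw [hg]
    ext i j
    fin_cases i <;> fin_cases j <;>
      simp only [hX, hA, Matrix.mul_apply, Matrix.add_apply, Matrix.smul_apply, smul_eq_mul,
        Fin.sum_univ_two, Matrix.one_apply, Fin.zero_eta, Fin.mk_one, ne_eq, zero_ne_one,
        one_ne_zero, not_false_eq_true, if_true, if_false, ite_true, ite_false, mul_zero,
        mul_one, add_zero, zero_add, Matrix.cons_val', Matrix.cons_val_zero, Matrix.cons_val_one,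
        Matrix.head_cons, Matrix.head_fin_const]
    · linear_combination (4*(B 0 0)*(2*z*c+1) - 4*c*d) * hc + (-4*(B 0 0)*c^2) * e1 + (4*c^2) * e2
    · linear_combination (4*(B 0 1)*(2*z*c+1)) * hc + (-4*(B 0 1)*c^2) * e1
    · linear_combination (4*(B 1 0)*(2*z*c+1)) * hc + (-4*(B 1 0)*c^2) * e1
    · linear_combination (4*(B 1 1)*(2*z*c+1) - 4*c*d) * hc + (-4*(B 1 1)*c^2) * e1 + (4*c^2) * e2
  have hXunit : IsUnit X := by
    rw [Matrix.isUnit_iff_isUnit_det]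
    refine isUnit_of_mul_isUnit_left (y := X.det) ?_
    rw [← Matrix.det_mul, hXX]
    exact (Matrix.isUnit_iff_isUnit_det _).1 (Units.isUnit g)
  refine ⟨hXunit.unit, ?_, ?_⟩
  · rw [mem_cong']
    exact ⟨A, by rw [IsUnit.unit_spec, hX, pow_one]⟩
  · apply Units.ext
    rw [Units.val_pow_eq_pow_val, IsUnit.unit_spec, pow_two, hXX]

noncomputable def scrH : Subgroup (GL (Fin 2) ℤ_[2]) :=
  Subgroup.closure {g : GL (Fin 2) ℤ_[2] | ∃ h ∈ congSubgroup 1, g = h ^ 2}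

lemma scrH_le_Ssub : scrH ≤ Ssub := by
  rw [scrH, Subgroup.closure_le]
  rintro g ⟨h, hh, rfl⟩
  exact sq_mem_Ssub hh

lemma det_one_add_four_smul {g : GL (Fin 2) ℤ_[2]} {B : M2} (hB : (g:M2) = 1 + (4:ℤ_[2]) • B) :
    Matrix.det (g:M2) = 1 + 4*(B 0 0 + B 1 1) + 16*(B 0 0 * B 1 1 - B 0 1 * B 1 0) := by
  rw [hB, Matrix.det_fin_two]
  simp only [Matrix.add_apply, Matrix.smul_apply, smul_eq_mul, Matrix.one_apply_eq,
    Matrix.one_apply_ne (show (0:Fin 2) ≠ 1 by decide),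
    Matrix.one_apply_ne (show (1:Fin 2) ≠ 0 by decide)]
  ring

lemma trace_even {g : GL (Fin 2) ℤ_[2]} {B : M2} (hB : (g:M2) = 1 + (4:ℤ_[2]) • B)
    (hu : ∃ u : ℤ_[2], Matrix.det (g:M2) = 1 + 8*u) : (2:ℤ_[2]) ∣ (B 0 0 + B 1 1) := by
  obtain ⟨u, hu⟩ := hu
  have hdet := det_one_add_four_smul hB
  refine ⟨u - 2*(B 0 0 * B 1 1 - B 0 1 * B 1 0), ?_⟩
  apply mul_left_cancel₀ (show (4:ℤ_[2]) ≠ 0 by norm_num)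
  linear_combination hu - hdet

lemma odd_sub_one' {x : ℤ_[2]} (h : ¬ (2:ℤ_[2]) ∣ x) : (2:ℤ_[2]) ∣ (x - 1) := by
  rw [two_dvd_iff] at h ⊢
  rw [_root_.map_sub, _root_.map_one]
  have : ∀ y : ZMod (2^1), y ≠ 0 → y - 1 = 0 := by decide
  exact this _ h

lemma Ssub_le_scrH : Ssub ≤ scrH := by
  intro g hg
  obtain ⟨hg2, hu⟩ := hg
  obtain ⟨B, hB⟩ := mem_cong'.1 hg2
  rw [show ((2:ℤ_[2])^2) = 4 by norm_num] at hB
  have hτ := trace_even hB hu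
  by_cases hδ : (2:ℤ_[2]) ∣ (B 0 0 * B 1 1 - B 0 1 * B 1 0)
  · obtain ⟨h, hh, rfl⟩ := sqrt_exists hB hτ hδ
    exact Subgroup.subset_closure ⟨h, hh, rfl⟩
  · -- multiply by the square of h₀ = 1 + 2 • !![1,1;1,0]
    have hX₀unit : IsUnit (!![(3:ℤ_[2]),2;2,1]) := by
      rw [Matrix.isUnit_iff_isUnit_det]
      have : (!![(3:ℤ_[2]),2;2,1]).det = -1 := by
        rw [Matrix.det_fin_two]; simp; ring
      rw [this]
      exact IsUnit.neg isUnit_one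
    set h₀ : GL (Fin 2) ℤ_[2] := hX₀unit.unit with hh₀
    have hh₀val : (h₀ : M2) = !![(3:ℤ_[2]),2;2,1] := IsUnit.unit_spec _
    have hh₀mem : h₀ ∈ congSubgroup 1 := by
      rw [mem_cong']
      refine ⟨!![(1:ℤ_[2]),1;1,0], ?_⟩
      rw [hh₀val, pow_one]
      ext i j
      fin_cases i <;> fin_cases j <;>
        simp [Matrix.one_apply] <;> norm_num
    set B₁ : M2 := !![B 0 0 + 3 + 4*(3*B 0 0 + 2*B 0 1), B 0 1 + 2 + 4*(2*B 0 0 + B 0 1);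
      B 1 0 + 2 + 4*(3*B 1 0 + 2*B 1 1), B 1 1 + 1 + 4*(2*B 1 0 + B 1 1)] with hB₁
    have hsqval : ((h₀^2 : GL (Fin 2) ℤ_[2]) : M2) = (h₀ : M2) * (h₀ : M2) := by
      rw [Units.val_pow_eq_pow_val, pow_two]
    have hg' : ((g * h₀^2 : GL (Fin 2) ℤ_[2]) : M2) = 1 + (4:ℤ_[2]) • B₁ := by
      rw [Units.val_mul, hsqval, hh₀val, hB]
      ext i j
      fin_cases i <;> fin_cases j <;>
        simp [Matrix.mul_apply, Fin.sum_univ_two, Matrix.one_apply, hB₁] <;> ring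
    have hg'mem : g * h₀^2 ∈ Ssub := mul_mem ⟨hg2, hu⟩ (sq_mem_Ssub hh₀mem)
    have hτ₁ := trace_even hg' hg'mem.2
    have hδ₁ : (2:ℤ_[2]) ∣ (B₁ 0 0 * B₁ 1 1 - B₁ 0 1 * B₁ 1 0) := by
      rw [two_dvd_iff]
      have hτ2 := (two_dvd_iff _).1 hτ
      rw [map_add] at hτ2
      have hδ2 : PadicInt.toZModPow 1 (B 0 0 * B 1 1 - B 0 1 * B 1 0) ≠ 0 := by
        exact fun h0 => hδ ((two_dvd_iff _).2 h0)
      rw [_root_.map_sub, _root_.map_mul, _root_.map_mul] at hδ2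
      have e00 : B₁ 0 0 = B 0 0 + 3 + 4*(3*B 0 0 + 2*B 0 1) := rfl
      have e01 : B₁ 0 1 = B 0 1 + 2 + 4*(2*B 0 0 + B 0 1) := rfl
      have e10 : B₁ 1 0 = B 1 0 + 2 + 4*(3*B 1 0 + 2*B 1 1) := rfl
      have e11 : B₁ 1 1 = B 1 1 + 1 + 4*(2*B 1 0 + B 1 1) := rfl
      rw [e00, e01, e10, e11]
      simp only [_root_.map_sub, _root_.map_mul, _root_.map_add, _root_.map_ofNat,
        _root_.map_one]
      revert hτ2 hδ2
      generalize (PadicInt.toZModPow 1) (B 0 0) = a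
      generalize (PadicInt.toZModPow 1) (B 0 1) = b
      generalize (PadicInt.toZModPow 1) (B 1 0) = c'
      generalize (PadicInt.toZModPow 1) (B 1 1) = e
      revert a b c' e
      decide
    obtain ⟨h, hh, hheq⟩ := sqrt_exists hg' hτ₁ hδ₁
    have : g = h^2 * (h₀^2)⁻¹ := by
      rw [← hheq]
      group
    rw [this]
    exact mul_mem (Subgroup.subset_closure ⟨h, hh, rfl⟩)
      (inv_mem (Subgroup.subset_closure ⟨h₀, hh₀mem, rfl⟩))

lemma scrH_eq_Ssub : scrH = Ssub := le_antisymm scrH_le_Ssub Ssub_le_scrH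

/-- determinant map to `(ZMod 8)ˣ` on `H₂`. -/
noncomputable def f₂ : congSubgroup 2 →* (ZMod (2^3))ˣ :=
  (Units.map (PadicInt.toZModPow 3).toMonoidHom).comp
    ((Matrix.GeneralLinearGroup.det).comp (Subgroup.subtype (congSubgroup 2)))

lemma f₂_val (x : congSubgroup 2) :
    (f₂ x : ZMod (2^3)) = PadicInt.toZModPow 3 (Matrix.det ((x : GL (Fin 2) ℤ_[2]) : M2)) := rfl

lemma ker_f₂ : f₂.ker = Ssub.subgroupOf (congSubgroup 2) := by
  ext x
  rw [MonoidHom.mem_ker, Subgroup.mem_subgroupOf, Units.ext_iff, f₂_val, Units.val_one]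
  constructor
  · intro h
    refine ⟨x.2, ?_⟩
    have h8 : (2:ℤ_[2])^3 ∣ (Matrix.det ((x : GL (Fin 2) ℤ_[2]) : M2) - 1) := by
      rw [pow_dvd_iff, _root_.map_sub, _root_.map_one, h, sub_self]
    obtain ⟨u, hu⟩ := h8
    exact ⟨u, by linear_combination hu⟩
  · rintro ⟨-, u, hu⟩
    rw [hu]
    have : ((8:ℤ_[2])) = ((8:ℕ):ℤ_[2]) := by norm_num
    rw [_root_.map_add, _root_.map_one, _root_.map_mul, this, map_natCast]
    have : ((8:ℕ) : ZMod (2^3)) = 0 := by decide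
    rw [this, zero_mul, add_zero]

noncomputable def u5 : (ZMod (2^3))ˣ := ⟨5, 5, by decide, by decide⟩

lemma range_f₂ : (f₂.range : Set ((ZMod (2^3))ˣ)) = {1, u5} := by
  ext y
  simp only [Set.mem_insert_iff, Set.mem_singleton_iff, SetLike.mem_coe, MonoidHom.mem_range]
  constructor
  · rintro ⟨x, rfl⟩
    obtain ⟨B, hB⟩ := mem_cong'.1 x.2
    rw [show ((2:ℤ_[2])^2) = 4 by norm_num] at hB
    have hdet := det_one_add_four_smul hB
    have hval : (f₂ x : ZMod (2^3)) = 1 + 4 * PadicInt.toZModPow 3 (B 0 0 + B 1 1)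
        + 16 * PadicInt.toZModPow 3 (B 0 0 * B 1 1 - B 0 1 * B 1 0) := by
      rw [f₂_val, hdet]
      push_cast [_root_.map_add, _root_.map_mul, _root_.map_one, _root_.map_ofNat]
      ring
    have key : ∀ y w : ZMod (2^3), 1 + 4*y + 16*w = 1 ∨ 1 + 4*y + 16*w = 5 := by decide
    rcases key (PadicInt.toZModPow 3 (B 0 0 + B 1 1))
        (PadicInt.toZModPow 3 (B 0 0 * B 1 1 - B 0 1 * B 1 0)) with h | h
    · left; exact Units.ext (by rw [hval, h]; rfl)
    · right; exact Units.ext (by rw [hval, h]; rfl)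
  · rintro (rfl | rfl)
    · exact ⟨1, map_one f₂⟩
    · have hunit : IsUnit (!![(5:ℤ_[2]),0;0,1]) := by
        rw [Matrix.isUnit_iff_isUnit_det]
        have : (!![(5:ℤ_[2]),0;0,1]).det = 5 := by
          rw [Matrix.det_fin_two]; simp
        rw [this, show (5:ℤ_[2]) = 1 + 2*2 by norm_num]
        exact PadicInt.isUnit_iff.2 (norm_one_of_odd (not_two_dvd_one_add_two_mul 2))
      have hmem : hunit.unit ∈ congSubgroup 2 := by
        rw [mem_cong']
        refine ⟨!![(1:ℤ_[2]),0;0,0], ?_⟩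
        rw [IsUnit.unit_spec]
        ext i j
        fin_cases i <;> fin_cases j <;> simp [Matrix.one_apply] <;> norm_num
      refine ⟨⟨hunit.unit, hmem⟩, ?_⟩
      apply Units.ext
      rw [f₂_val]
      show PadicInt.toZModPow 3 (Matrix.det (!![(5:ℤ_[2]),0;0,1])) = 5
      have : (!![(5:ℤ_[2]),0;0,1]).det = 5 := by rw [Matrix.det_fin_two]; simp
      rw [this, show (5:ℤ_[2]) = ((5:ℕ):ℤ_[2]) by norm_num, map_natCast]
      decide

lemma relindex_two : scrH.relIndex (congSubgroup 2) = 2 := by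
  rw [Subgroup.relIndex, scrH_eq_Ssub, ← ker_f₂, Subgroup.index_ker]
  have h1 : Nat.card f₂.range = Nat.card ({1, u5} : Set ((ZMod (2^3))ˣ)) :=
    Nat.card_congr (Equiv.setCongr range_f₂)
  rw [h1, Nat.card_coe_set_eq, Set.ncard_pair]
  intro h
  have := congrArg Units.val h
  rw [Units.val_one] at this
  exact absurd this (by decide)

lemma half_aux (x : ℤ_[2]) : ∃ y, (2:ℤ_[2]) ∣ x → x = 2*y := by
  by_cases h : (2:ℤ_[2]) ∣ x
  · exact ⟨h.choose, fun _ => h.choose_spec⟩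
  · exact ⟨0, fun hh => absurd hh h⟩

noncomputable def half (x : ℤ_[2]) : ℤ_[2] := Classical.choose (half_aux x)

lemma half_eq {x y : ℤ_[2]} (h : x = 2*y) : half x = y := by
  have h2 : x = 2 * half x := Classical.choose_spec (half_aux x) ⟨y, h⟩
  apply mul_left_cancel₀ (show (2:ℤ_[2]) ≠ 0 by norm_num)
  rw [← h2, ← h]

noncomputable def ρfun (g : congSubgroup 1) : Matrix (Fin 2) (Fin 2) (ZMod (2^1)) :=
  Matrix.of fun i j => PadicInt.toZModPow 1
    (half ((((g : GL (Fin 2) ℤ_[2]) : M2) - 1) i j))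

lemma ρfun_eq {g : congSubgroup 1} {A : M2}
    (hA : ((g : GL (Fin 2) ℤ_[2]) : M2) = 1 + (2:ℤ_[2]) • A) :
    ρfun g = A.map (PadicInt.toZModPow 1) := by
  ext i j
  show PadicInt.toZModPow 1 (half ((((g : GL (Fin 2) ℤ_[2]) : M2) - 1) i j)) = _
  rw [half_eq (show (((g : GL (Fin 2) ℤ_[2]) : M2) - 1) i j = 2 * A i j by
    rw [hA]; simp [Matrix.sub_apply, Matrix.add_apply, Matrix.smul_apply, smul_eq_mul])]
  rfl

noncomputable def ρ : congSubgroup 1 →* Multiplicative (Matrix (Fin 2) (Fin 2) (ZMod (2^1))) where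
  toFun g := Multiplicative.ofAdd (ρfun g)
  map_one' := by
    show Multiplicative.ofAdd (ρfun 1) = 1
    have : ρfun 1 = (0 : M2).map (PadicInt.toZModPow 1) := by
      apply ρfun_eq
      show ((1 : GL (Fin 2) ℤ_[2]) : M2) = 1 + (2:ℤ_[2]) • (0:M2)
      simp
    have h0 : ρfun 1 = 0 := by rw [this]; ext i j; simp [Matrix.map_apply]
    rw [h0]
    rfl
  map_mul' a b := by
    obtain ⟨A, hA⟩ := mem_cong'.1 a.2
    obtain ⟨C, hC⟩ := mem_cong'.1 b.2
    rw [pow_one] at hA hC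
    have hab : (((a*b : congSubgroup 1) : GL (Fin 2) ℤ_[2]) : M2)
        = 1 + (2:ℤ_[2]) • (A + C + (2:ℤ_[2]) • (A*C)) := by
      have : (((a*b : congSubgroup 1) : GL (Fin 2) ℤ_[2]) : M2)
          = (((a : GL (Fin 2) ℤ_[2]) : M2)) * (((b : GL (Fin 2) ℤ_[2]) : M2)) := rfl
      rw [this, hA, hC]
      ext i j
      simp [Matrix.mul_apply, Fin.sum_univ_two, Matrix.add_apply, Matrix.smul_apply,
        Matrix.one_apply, Fin.forall_fin_two]
      fin_cases i <;> fin_cases j <;> simp [Matrix.one_apply] <;> ring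
    show Multiplicative.ofAdd (ρfun (a*b)) = Multiplicative.ofAdd (ρfun a + ρfun b)
    rw [ρfun_eq hab, ρfun_eq hA, ρfun_eq hC]
    congr 1
    ext i j
    simp only [Matrix.map_apply, Matrix.add_apply, Matrix.smul_apply, smul_eq_mul,
      _root_.map_add, _root_.map_mul, _root_.map_ofNat]
    have h2 : ((2:ZMod (2^1))) = 0 := by decide
    rw [h2]
    ring

lemma ker_ρ : ρ.ker = (congSubgroup 2).subgroupOf (congSubgroup 1) := by
  ext x
  rw [MonoidHom.mem_ker, Subgroup.mem_subgroupOf]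
  have hx1 : ρ x = Multiplicative.ofAdd (ρfun x) := rfl
  constructor
  · intro h
    have h0 : ρfun x = 0 := by
      have := congrArg Multiplicative.toAdd (hx1 ▸ h)
      simpa using this
    rw [mem_cong]
    intro i j
    have hij : PadicInt.toZModPow 1 (half ((((x : GL (Fin 2) ℤ_[2]) : M2) - 1) i j)) = 0 := by
      have := congrFun (congrFun h0 i) j
      exact this
    rw [← two_dvd_iff] at hij
    obtain ⟨k, hk⟩ := hij
    obtain ⟨A, hA⟩ := mem_cong'.1 x.2
    rw [pow_one] at hA
    have h2 : (((x : GL (Fin 2) ℤ_[2]) : M2) - 1) i j = 2 * A i j := by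
      rw [hA]; simp [Matrix.sub_apply, Matrix.add_apply, Matrix.smul_apply, smul_eq_mul]
    have hhalf : half ((((x : GL (Fin 2) ℤ_[2]) : M2) - 1) i j) = A i j := half_eq h2
    rw [hhalf] at hk
    refine ⟨k, ?_⟩
    have : ((x : GL (Fin 2) ℤ_[2]) : M2) i j - (1:M2) i j
        = (((x : GL (Fin 2) ℤ_[2]) : M2) - 1) i j := by simp [Matrix.sub_apply]
    rw [this, h2, hk]
    ring
  · intro h
    obtain ⟨A, hA⟩ := mem_cong'.1 h
    rw [show ((2:ℤ_[2])^2) = 4 by norm_num] at hA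
    have h4 : ((x : GL (Fin 2) ℤ_[2]) : M2) = 1 + (2:ℤ_[2]) • ((2:ℤ_[2]) • A) := by
      rw [hA]; ext i j; simp [Matrix.add_apply, Matrix.smul_apply]; ring
    rw [hx1, ρfun_eq h4]
    have : ((2:ℤ_[2]) • A).map (PadicInt.toZModPow 1) = 0 := by
      ext i j
      simp only [Matrix.map_apply, Matrix.smul_apply, smul_eq_mul, _root_.map_mul,
        Matrix.zero_apply]
      have h2 : PadicInt.toZModPow 1 (2:ℤ_[2]) = 0 := by
        rw [show (2:ℤ_[2]) = ((2:ℕ):ℤ_[2]) by norm_num, map_natCast]; decide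
      rw [h2, zero_mul]
    rw [this]
    rfl

lemma det_one_add_two_smul (A : M2) : (1 + (2:ℤ_[2]) • A).det
    = 1 + 2*((A 0 0 + A 1 1) + 2*(A 0 0 * A 1 1 - A 0 1 * A 1 0)) := by
  rw [Matrix.det_fin_two]
  simp only [Matrix.add_apply, Matrix.smul_apply, smul_eq_mul, Matrix.one_apply_eq,
    Matrix.one_apply_ne (show (0:Fin 2) ≠ 1 by decide),
    Matrix.one_apply_ne (show (1:Fin 2) ≠ 0 by decide)]
  ring

lemma ρ_surj : Function.Surjective ρ := by
  intro m
  set A : M2 := Matrix.of fun i j => (((Multiplicative.toAdd m) i j).val : ℤ_[2]) with hAdef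
  have hunit : IsUnit (1 + (2:ℤ_[2]) • A) := by
    rw [Matrix.isUnit_iff_isUnit_det, det_one_add_two_smul]
    exact PadicInt.isUnit_iff.2 (norm_one_of_odd (not_two_dvd_one_add_two_mul _))
  have hmem : hunit.unit ∈ congSubgroup 1 := by
    rw [mem_cong']
    exact ⟨A, by rw [IsUnit.unit_spec, pow_one]⟩
  refine ⟨⟨hunit.unit, hmem⟩, ?_⟩
  have hval : ((hunit.unit : GL (Fin 2) ℤ_[2]) : M2) = 1 + (2:ℤ_[2]) • A := IsUnit.unit_spec _
  show Multiplicative.ofAdd (ρfun ⟨hunit.unit, hmem⟩) = m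
  rw [ρfun_eq hval]
  have : A.map (PadicInt.toZModPow 1) = Multiplicative.toAdd m := by
    ext i j
    simp only [Matrix.map_apply, hAdef, Matrix.of_apply, map_natCast]
    rw [ZMod.natCast_val, ZMod.cast_id]
  rw [this]
  rfl

lemma relindex_sixteen : (congSubgroup 2).relIndex (congSubgroup 1) = 16 := by
  rw [Subgroup.relIndex, ← ker_ρ, Subgroup.index_ker, MonoidHom.range_eq_top.2 ρ_surj,
    Subgroup.card_top]
  rw [Nat.card_congr (Multiplicative.toAdd
    (α := Matrix (Fin 2) (Fin 2) (ZMod (2^1))))]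
  rw [Nat.card_congr (Matrix.of (m := Fin 2) (n := Fin 2) (α := ZMod (2^1))).symm]
  rw [Nat.card_eq_fintype_card, Fintype.card_fun, Fintype.card_fun]
  rfl

/-- With `H₁ = 1 + 2·M₂(ℤ₂)`, `H₂ = 1 + 4·M₂(ℤ₂)`, and `𝓗` the subgroup of `H₁` generated by
squares, one has `𝓗 = {g ∈ H₂ : det g ≡ 1 mod 8}`, `[H₂ : 𝓗] = 2` and `[H₁ : 𝓗] = 2⁵`. -/
theorem scrH_eq_det_one_mod_eight :
    (scrH : Set (GL (Fin 2) ℤ_[2])) =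
      {g : GL (Fin 2) ℤ_[2] | g ∈ congSubgroup 2 ∧
        ∃ u : ℤ_[2], Matrix.det (g : Matrix (Fin 2) (Fin 2) ℤ_[2]) = 1 + 8 * u} ∧
    scrH.relIndex (congSubgroup 2) = 2 ∧ scrH.relIndex (congSubgroup 1) = 2 ^ 5 := by
  refine ⟨?_, relindex_two, ?_⟩
  · rw [scrH_eq_Ssub]; rfl
  · have hle1 : scrH ≤ congSubgroup 2 := fun g hg => (scrH_le_Ssub hg).1
    have hle2 : congSubgroup 2 ≤ congSubgroup 1 := cong_le (by norm_num)
    have := Subgroup.relIndex_mul_relIndex scrH (congSubgroup 2) (congSubgroup 1) hle1 hle2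
    rw [relindex_two, relindex_sixteen] at this
    rw [← this]
    norm_num
end

section
/- Let M = ℚ₂(√5) and let q ∈ ℚ₂^× with ord₂(q) odd. Set H = {x ∈ M^× : N_{M/ℚ₂}(x) ∈ q^ℤ}. Then H = q^ℤ × U_{M,1}, where U_{M,1} is the group of units of M of norm 1. -/
lemma sq_ne_five (r : ℚ_[2]) : r ^ 2 ≠ 5 := by
  intro h
  have hr : ‖r‖ ≤ 1 := by
    by_contra hgt
    push_neg at hgt
    have h5 : ‖(5 : ℚ_[2])‖ ≤ 1 := by
      have := Padic.norm_int_le_one (p := 2) 5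
      simpa using this
    have : ‖r ^ 2‖ > 1 := by
      rw [norm_pow]
      nlinarith
    rw [h] at this
    linarith
  set z : ℤ_[2] := ⟨r, hr⟩ with hz
  have hz2 : z ^ 2 = 5 := by
    apply Subtype.ext
    push_cast [hz]
    exact h
  have : (PadicInt.toZModPow 3 z) ^ 2 = 5 := by
    rw [← map_pow, hz2, map_ofNat]
  have hd : ∀ w : ZMod 8, w ^ 2 ≠ 5 := by decide
  exact hd _ (by exact_mod_cast this)


lemma unit_sq_sub_five (u : ℤ_[2]) (hu : ‖u‖ = 1) : ‖u ^ 2 - 5‖ = (2 : ℝ) ^ (-2 : ℤ) := by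
  have hu' : IsUnit u := PadicInt.isUnit_iff.mpr hu
  have h4 : u ^ 2 - 5 ∈ (Ideal.span {((2 : ℕ) : ℤ_[2]) ^ 2} : Ideal ℤ_[2]) := by
    rw [← PadicInt.ker_toZModPow (p := 2) 2, RingHom.mem_ker]
    obtain ⟨w, hw⟩ := hu'.map (PadicInt.toZModPow (p := 2) 2)
    have hd : ∀ w : (ZMod (2 ^ 2))ˣ, (w : ZMod (2 ^ 2)) ^ 2 - 5 = 0 := by decide
    rw [map_sub, map_pow, ← hw, map_ofNat]
    exact hd w
  have h8 : u ^ 2 - 5 ∉ (Ideal.span {((2 : ℕ) : ℤ_[2]) ^ 3} : Ideal ℤ_[2]) := by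
    rw [← PadicInt.ker_toZModPow (p := 2) 3, RingHom.mem_ker]
    obtain ⟨w, hw⟩ := hu'.map (PadicInt.toZModPow (p := 2) 3)
    have hd : ∀ w : (ZMod (2 ^ 3))ˣ, (w : ZMod (2 ^ 3)) ^ 2 - 5 ≠ 0 := by decide
    rw [map_sub, map_pow, ← hw, map_ofNat]
    exact hd w
  have hx : u ^ 2 - 5 ≠ 0 := by
    intro h
    exact h8 (h ▸ Ideal.zero_mem _)
  have hv2 : ((2 : ℕ) : ℤ) ≤ (u ^ 2 - 5).valuation :=
    by exact_mod_cast (PadicInt.mem_span_pow_iff_le_valuation _ hx 2).mp h4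
  have hv3 : ¬ ((3 : ℕ) : ℤ) ≤ (u ^ 2 - 5).valuation :=
    fun h => h8 ((PadicInt.mem_span_pow_iff_le_valuation _ hx 3).mpr (by exact_mod_cast h))
  have hv : (u ^ 2 - 5).valuation = 2 := by push_cast at hv2 hv3; omega
  rw [PadicInt.norm_eq_zpow_neg_valuation hx, hv]
  norm_num



lemma norm_five : ‖(5 : ℚ_[2])‖ = 1 := by
  have h1 : ‖((5 : ℤ) : ℚ_[2])‖ ≤ 1 := Padic.norm_int_le_one 5
  have h2 : ¬ ‖((5 : ℤ) : ℚ_[2])‖ < 1 := by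
    rw [Padic.norm_intCast_lt_one_iff]
    decide
  push_cast at h1 h2
  linarith [lt_or_eq_of_le h1]

lemma parity (a c : ℚ_[2]) (h : a ≠ 0 ∨ c ≠ 0) :
    ∃ j : ℤ, ‖a ^ 2 - 5 * c ^ 2‖ = (2 : ℝ) ^ (2 * j) := by
  have hsq : ∀ b : ℚ_[2], b ≠ 0 → ∃ j : ℤ, ‖b ^ 2‖ = (2 : ℝ) ^ (2 * j) := by
    intro b hb
    refine ⟨-b.valuation, ?_⟩
    rw [norm_pow, Padic.norm_eq_zpow_neg_valuation hb]
    push_cast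
    rw [← zpow_natCast ((2:ℝ) ^ (-b.valuation)), ← zpow_mul]
    ring_nf
  rcases eq_or_ne c 0 with rfl | hc
  · obtain ⟨j, hj⟩ := hsq a (h.resolve_right (by simp))
    exact ⟨j, by simpa using hj⟩
  rcases eq_or_ne a 0 with rfl | ha
  · obtain ⟨j, hj⟩ := hsq c hc
    refine ⟨j, ?_⟩
    rw [show (0:ℚ_[2]) ^ 2 - 5 * c ^ 2 = -(5 * c ^ 2) by ring, norm_neg, norm_mul, norm_five,
      one_mul, hj]
  rcases eq_or_ne ‖a‖ ‖c‖ with hac | hac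
  · -- ‖a‖ = ‖c‖ : use the mod 8 argument
    have hc0 : ‖c‖ ≠ 0 := norm_ne_zero_iff.mpr hc
    have hu : ‖a / c‖ = 1 := by
      rw [norm_div, hac, div_self hc0]
    set u : ℤ_[2] := ⟨a / c, le_of_eq hu⟩ with hudef
    have hcoe : ((u ^ 2 - 5 : ℤ_[2]) : ℚ_[2]) = (a / c) ^ 2 - 5 := by
      push_cast [hudef]
      norm_num
      rfl
    have key : ‖(a / c) ^ 2 - 5‖ = (2 : ℝ) ^ (-2 : ℤ) := by
      rw [← hcoe, ← PadicInt.norm_def]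
      exact unit_sq_sub_five u hu
    have hfactor : a ^ 2 - 5 * c ^ 2 = c ^ 2 * ((a / c) ^ 2 - 5) := by
      field_simp
    refine ⟨-c.valuation - 1, ?_⟩
    rw [hfactor, norm_mul, key, norm_pow, Padic.norm_eq_zpow_neg_valuation hc]
    push_cast
    rw [← zpow_natCast ((2:ℝ) ^ (-c.valuation)), ← zpow_mul, ← zpow_add₀ (by norm_num : (2:ℝ) ≠ 0)]
    ring_nf
  · -- ‖a‖ ≠ ‖c‖
    have hmax : ‖a ^ 2 - 5 * c ^ 2‖ = max ‖a ^ 2‖ ‖-(5 * c ^ 2)‖ := by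
      rw [sub_eq_add_neg]
      apply Padic.add_eq_max_of_ne
      rw [norm_neg, norm_mul, norm_five, one_mul, norm_pow, norm_pow]
      intro hcon
      exact hac (by nlinarith [norm_nonneg a, norm_nonneg c, sq_abs ‖a‖])
    obtain ⟨j1, hj1⟩ := hsq a ha
    obtain ⟨j2, hj2⟩ := hsq c hc
    rw [hmax, norm_neg, norm_mul, norm_five, one_mul, hj1, hj2]
    rcases max_cases ((2:ℝ) ^ (2 * j1)) ((2:ℝ) ^ (2 * j2)) with ⟨h', _⟩ | ⟨h', _⟩ <;>
      [exact ⟨j1, h'⟩; exact ⟨j2, h'⟩]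


section
variable (M : Type) [Field M] [Algebra ℚ_[2] M]
  (hrank : Module.finrank ℚ_[2] M = 2) (s : M) (hs : s ^ 2 = 5)

include hrank hs

lemma li_one_s : LinearIndependent ℚ_[2] ![(1 : M), s] := by
  rw [LinearIndependent.pair_iff]
  intro t u htu
  by_cases hu : u = 0
  · subst hu
    simp only [zero_smul, add_zero, smul_eq_zero, one_ne_zero, or_false] at htu
    exact ⟨htu, rfl⟩
  · exfalso
    have hsval : s = algebraMap ℚ_[2] M (-t / u) := by
      have h1 : u • s = (-t) • (1 : M) := by linear_combination (norm := module) htu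
      have h2 : s = (u⁻¹ * -t) • (1 : M) := by rw [mul_smul, ← h1, inv_smul_smul₀ hu]
      rw [Algebra.algebraMap_eq_smul_one, h2, inv_mul_eq_div]
    apply sq_ne_five (-t / u)
    have h5 : (5 : M) = algebraMap ℚ_[2] M 5 := (map_ofNat (algebraMap ℚ_[2] M) 5).symm
    have : algebraMap ℚ_[2] M ((-t / u) ^ 2) = algebraMap ℚ_[2] M 5 := by
      rw [map_pow, ← hsval, hs, h5]
    exact (algebraMap ℚ_[2] M).injective this

noncomputable def bas : Module.Basis (Fin 2) ℚ_[2] M :=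
  have : FiniteDimensional ℚ_[2] M := FiniteDimensional.of_finrank_eq_succ hrank
  basisOfLinearIndependentOfCardEqFinrank (li_one_s M hrank s hs) (by simp [hrank])

lemma norm_formula (a c : ℚ_[2]) :
    Algebra.norm ℚ_[2] (algebraMap ℚ_[2] M a + c • s) = a ^ 2 - 5 * c ^ 2 := by
  classical
  have : FiniteDimensional ℚ_[2] M := FiniteDimensional.of_finrank_eq_succ hrank
  set b := bas M hrank s hs with hb
  have hb0 : b 0 = 1 := by
    rw [hb, bas, coe_basisOfLinearIndependentOfCardEqFinrank]; rfl
  have hb1 : b 1 = s := by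
    rw [hb, bas, coe_basisOfLinearIndependentOfCardEqFinrank]; rfl
  have hrepr : ∀ y z : ℚ_[2], ∀ i, b.repr (y • b 0 + z • b 1) i
      = (Finsupp.single (0 : Fin 2) y + Finsupp.single (1 : Fin 2) z) i := by
    intro y z i
    rw [map_add, map_smul, map_smul, b.repr_self, b.repr_self]
    simp [Finsupp.smul_single]
  have hxb0 : (algebraMap ℚ_[2] M a + c • s) * b 0 = a • b 0 + c • b 1 := by
    rw [hb0, hb1, mul_one, Algebra.algebraMap_eq_smul_one]
  have hxb1 : (algebraMap ℚ_[2] M a + c • s) * b 1 = (5 * c) • b 0 + a • b 1 := by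
    rw [hb0, hb1]
    have h5 : (5 : M) = algebraMap ℚ_[2] M 5 := (map_ofNat (algebraMap ℚ_[2] M) 5).symm
    rw [Algebra.smul_def, Algebra.smul_def, Algebra.smul_def]
    rw [add_mul, mul_assoc, ← pow_two, hs, h5, mul_one, ← map_mul]
    rw [mul_comm c 5, add_comm]
  rw [Algebra.norm_eq_matrix_det b, Matrix.det_fin_two]
  rw [Algebra.leftMulMatrix_eq_repr_mul, Algebra.leftMulMatrix_eq_repr_mul,
    Algebra.leftMulMatrix_eq_repr_mul, Algebra.leftMulMatrix_eq_repr_mul]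
  rw [hxb0, hxb1, hrepr, hrepr, hrepr, hrepr]
  simp [Finsupp.single_apply]
  ring

lemma repr_exists (x : M) : ∃ a c : ℚ_[2], x = algebraMap ℚ_[2] M a + c • s := by
  classical
  have : FiniteDimensional ℚ_[2] M := FiniteDimensional.of_finrank_eq_succ hrank
  set b := bas M hrank s hs with hb
  have hb0 : b 0 = 1 := by
    rw [hb, bas, coe_basisOfLinearIndependentOfCardEqFinrank]; rfl
  have hb1 : b 1 = s := by
    rw [hb, bas, coe_basisOfLinearIndependentOfCardEqFinrank]; rfl
  refine ⟨b.repr x 0, b.repr x 1, ?_⟩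
  have h := b.sum_repr x
  rw [Fin.sum_univ_two, hb0, hb1] at h
  rw [Algebra.algebraMap_eq_smul_one]
  exact h.symm

end

lemma two_zpow_inj : Function.Injective fun n : ℤ => (2 : ℝ) ^ n :=
  zpow_right_injective₀ (by norm_num) (by norm_num)

lemma q_norm_zpow (q : ℚ_[2]) (hq0 : q ≠ 0) (k : ℤ) :
    ‖q ^ k‖ = (2 : ℝ) ^ (-(k * q.valuation)) := by
  rw [norm_zpow, Padic.norm_eq_zpow_neg_valuation hq0]
  push_cast
  rw [← zpow_mul]
  ring_nf

lemma q_zpow_inj (q : ℚ_[2]) (hq0 : q ≠ 0) (hvq : q.valuation ≠ 0) {m n : ℤ}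
    (h : q ^ m = q ^ n) : m = n := by
  have h2 := congrArg (‖·‖) h
  simp only [q_norm_zpow q hq0] at h2
  have := two_zpow_inj h2
  have : m * q.valuation = n * q.valuation := by omega
  exact mul_right_cancel₀ hvq this

/-- Let `M = ℚ₂(√5)` and `q ∈ ℚ₂^×` with `ord₂(q)` odd.  Setting
`H = {x ∈ M^× : N_{M/ℚ₂}(x) ∈ q^ℤ}`, one has `H = q^ℤ × U_{M,1}`: an element `x ∈ M^×` has
norm in `q^ℤ` iff it can be written uniquely as `x = q^k·u` with `k ∈ ℤ` and `u` a norm-one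
unit. -/
theorem H_eq_qpow_times_norm_one (M : Type) [NormedField M] [NormedAlgebra ℚ_[2] M]
    [CompleteSpace M] (hrank : Module.finrank ℚ_[2] M = 2)
    (hisom : ∀ x : ℚ_[2], ‖algebraMap ℚ_[2] M x‖ = ‖x‖)
    (hunram : ∀ x : M, x ≠ 0 → ∃ k : ℤ, ‖x‖ = (2 : ℝ) ^ k)
    (s : M) (hs : s ^ 2 = 5)
    (q : ℚ_[2]ˣ) (hq : Odd ((q : ℚ_[2]).valuation)) :
    ∀ x : Mˣ,
      (∃ k : ℤ, Algebra.norm ℚ_[2] ((x : M)) = (q : ℚ_[2]) ^ k) ↔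
      (∃! t : ℤ × Mˣ, Algebra.norm ℚ_[2] ((t.2 : M)) = 1 ∧
        x = (Units.map (algebraMap ℚ_[2] M).toMonoidHom q) ^ t.1 * t.2) := by
  intro x
  have hq0 : (q : ℚ_[2]) ≠ 0 := q.ne_zero
  have hvq : (q : ℚ_[2]).valuation ≠ 0 := by
    intro h
    rw [h] at hq
    exact (by decide : ¬ Odd (0 : ℤ)) hq
  set Q : Mˣ := Units.map (algebraMap ℚ_[2] M).toMonoidHom q with hQdef
  have hNQ : Algebra.norm ℚ_[2] ((Q : M)) = (q : ℚ_[2]) ^ (2 : ℕ) := by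
    show Algebra.norm ℚ_[2] (algebraMap ℚ_[2] M q) = _
    rw [Algebra.norm_algebraMap, hrank]
  have hνz : ∀ (u : Mˣ) (k : ℤ),
      Algebra.norm ℚ_[2] ((↑(u ^ k) : M)) = (Algebra.norm ℚ_[2] ((u : M))) ^ k := by
    intro u k
    have h := map_zpow (Units.map (Algebra.norm ℚ_[2] : M →* ℚ_[2])) u k
    calc Algebra.norm ℚ_[2] ((↑(u ^ k) : M))
        = ((Units.map (Algebra.norm ℚ_[2] : M →* ℚ_[2]) (u ^ k) : ℚ_[2]ˣ) : ℚ_[2]) := rfl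
      _ = (((Units.map (Algebra.norm ℚ_[2] : M →* ℚ_[2]) u) ^ k : ℚ_[2]ˣ) : ℚ_[2]) := by rw [h]
      _ = ((Units.map (Algebra.norm ℚ_[2] : M →* ℚ_[2]) u : ℚ_[2]ˣ) : ℚ_[2]) ^ k :=
          Units.val_zpow_eq_zpow_val _ _
      _ = (Algebra.norm ℚ_[2] ((u : M))) ^ k := rfl
  constructor
  · rintro ⟨k, hk⟩
    obtain ⟨a, c, hac⟩ := repr_exists M hrank s hs (x : M)
    have hx0 : (x : M) ≠ 0 := x.ne_zero
    have hne : a ≠ 0 ∨ c ≠ 0 := by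
      by_contra h
      push_neg at h
      apply hx0
      rw [hac, h.1, h.2]
      simp
    have hNx : Algebra.norm ℚ_[2] ((x : M)) = a ^ 2 - 5 * c ^ 2 := by
      rw [hac]
      exact norm_formula M hrank s hs a c
    obtain ⟨j, hj⟩ := parity a c hne
    have h2j : (2 : ℝ) ^ (2 * j) = (2 : ℝ) ^ (-(k * (q : ℚ_[2]).valuation)) := by
      rw [← hj, ← q_norm_zpow _ hq0 k, ← hk, hNx]
    have heq : 2 * j = -(k * (q : ℚ_[2]).valuation) := two_zpow_inj h2j
    have hkeven : Even k := by
      rcases Int.even_mul.mp (⟨-j, by omega⟩ : Even (k * (q : ℚ_[2]).valuation)) with h | h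
      · exact h
      · exact absurd h (Int.not_even_iff_odd.mpr hq)
    obtain ⟨m, hm⟩ := hkeven
    refine ⟨(m, Q ^ (-m) * x), ⟨?_, ?_⟩, ?_⟩
    · show Algebra.norm ℚ_[2] ((↑(Q ^ (-m) * x) : M)) = 1
      rw [Units.val_mul, map_mul, hνz, hNQ, hk, ← zpow_natCast, ← zpow_mul,
        ← zpow_add₀ hq0]
      push_cast
      rw [show (2 : ℤ) * (-m) + k = 0 by omega, zpow_zero]
    · show x = Q ^ m * (Q ^ (-m) * x)
      rw [← mul_assoc, ← zpow_add, add_neg_cancel, zpow_zero, one_mul]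
    · rintro ⟨k', u'⟩ ⟨hu1, hu2⟩
      simp only at hu1 hu2
      have hNx' : Algebra.norm ℚ_[2] ((x : M)) = (q : ℚ_[2]) ^ (2 * k') := by
        rw [hu2, Units.val_mul, map_mul, hνz, hNQ, hu1, mul_one, ← zpow_natCast, ← zpow_mul]
        norm_num
      have hkk : 2 * k' = k := q_zpow_inj _ hq0 hvq (by rw [← hNx', hk])
      have hk'm : k' = m := by omega
      subst hk'm
      have hu' : u' = Q ^ (-k') * x := by
        rw [hu2, ← mul_assoc, ← zpow_add, neg_add_cancel, zpow_zero, one_mul]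
      simp only [Prod.mk.injEq]
      exact ⟨trivial, hu'⟩
  · rintro ⟨⟨k, u⟩, ⟨hu1, hu2⟩, -⟩
    simp only at hu1 hu2
    refine ⟨2 * k, ?_⟩
    rw [hu2, Units.val_mul, map_mul, hνz, hNQ, hu1, mul_one, ← zpow_natCast, ← zpow_mul]
    norm_num
end

section
/- Let G be a group, M a G-module, and α an element of the center of G. Then every element of H¹(G, M) is annihilated by the endomorphism x ↦ α·x − x of M; in particular, if x ↦ α·x − x is an automorphism of M, then H¹(G, M) = 0. -/
/-- (Lang, Thm 5.1) Let `G` be a group, `M` a `G`-module and `α` a central element of `G`.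
Then every element of `H¹(G, M)` is annihilated by `x ↦ α·x − x`: for every 1-cocycle
`f : G → M`, the cocycle `g ↦ α·f(g) − f(g)` is a coboundary.  In particular, if
`x ↦ α·x − x` is an automorphism of `M`, then `H¹(G, M) = 0`, i.e. every 1-cocycle is a
coboundary. -/
theorem central_element_annihilates_H1 (G : Type) [Group G] (M : Type) [AddCommGroup M]
    [DistribMulAction G M] (α : G) (hα : ∀ g : G, α * g = g * α) :
    (∀ f : G → M, (∀ g h : G, f (g * h) = f g + g • f h) →
      ∃ m : M, ∀ g : G, α • f g - f g = g • m - m) ∧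
    (Function.Bijective (fun x : M => α • x - x) →
      ∀ f : G → M, (∀ g h : G, f (g * h) = f g + g • f h) →
        ∃ m : M, ∀ g : G, f g = g • m - m) := by
  have key : ∀ f : G → M, (∀ g h : G, f (g * h) = f g + g • f h) →
      ∀ g : G, α • f g - f g = g • f α - f α := by
    intro f hf g
    have h1 : f (α * g) = f α + α • f g := hf α g
    have h2 : f (g * α) = f g + g • f α := hf g α
    rw [hα g] at h1
    rw [h2] at h1
    rw [sub_eq_sub_iff_add_eq_add, add_comm (α • f g), add_comm (g • f α)]
    exact h1.symm
  refine ⟨fun f hf => ⟨f α, key f hf⟩, fun hbij f hf => ?_⟩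
  obtain ⟨n, hn⟩ := hbij.2 (f α)
  refine ⟨n, fun g => hbij.1 ?_⟩
  simp only
  have hcomm : α • g • n = g • α • n := by
    rw [smul_smul, smul_smul, hα]
  rw [smul_sub, hcomm, key f hf g, ← hn]
  simp only [smul_sub]
  abel
end
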